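/- Let p be a prime with p = r^2 + 2s^2 and p ≡ 1 (mod 8). Then the Legendre symbol (r/p) equals the quartic residue symbol (2/p)_4, i.e., r is a quadratic residue mod p if and only if 2 is a fourth power modulo p. -/
import Mathlib

private lemma legendre_prod_aux (p : ℕ) [Fact p.Prime] :
    ∀ n : ℕ, 0 < n → (∀ q : ℕ, q.Prime → q ∣ n → legendreSym p (q : ℤ) = 1) →
      legendreSym p (n : ℤ) = 1 := by
  intro n
  induction n using Nat.strong_induction_on with
  | _ n ih =>
    intro hn hq
    rcases eq_or_ne n 1 with rfl | h1
    · simp [legendreSym.at_one p]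
    · obtain ⟨q, hqp, m, rfl⟩ := Nat.exists_prime_and_dvd h1
      have hm : 0 < m := Nat.pos_of_ne_zero (by rintro rfl; simp at hn)
      have hcast : ((q * m : ℕ) : ℤ) = (q : ℤ) * (m : ℤ) := by push_cast; ring
      rw [hcast, legendreSym.mul, hq q hqp ⟨m, rfl⟩, one_mul]
      exact ih m (by nlinarith [hqp.two_le]) hm
        (fun q' h1' h2' => hq q' h1' (h2'.mul_left q))

/-- For a prime p ≡ 1 (mod 8) with p = r² + 2s², r is a quadratic residue
mod p if and only if 2 is a fourth power modulo p. -/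
theorem stmt_7 (p : ℕ) [Fact p.Prime] (hp8 : p % 8 = 1) (r s : ℤ)
    (h : (p : ℤ) = r ^ 2 + 2 * s ^ 2) :
    IsSquare (r : ZMod p) ↔ ∃ x : ZMod p, x ^ 4 = 2 := by
  have hp : p.Prime := Fact.out
  have hp2 : p ≠ 2 := by omega
  have hp4 : p % 4 = 1 := by omega
  -- the basic relation in ZMod p
  have hrel : (r : ZMod p) ^ 2 = -(2 * (s : ZMod p) ^ 2) := by
    have hz : ((p : ℤ) : ZMod p) = 0 := by simp
    rw [h] at hz
    push_cast at hz
    linear_combination hz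
  -- p does not divide both r and s
  have hboth : ¬ ((p : ℤ) ∣ r ∧ (p : ℤ) ∣ s) := by
    rintro ⟨hr, hs⟩
    have h2 : (p : ℤ) ^ 2 ∣ r ^ 2 + 2 * s ^ 2 :=
      dvd_add (pow_dvd_pow_of_dvd hr 2) ((pow_dvd_pow_of_dvd hs 2).mul_left 2)
    rw [← h] at h2
    have hle : (p : ℤ) ^ 2 ≤ (p : ℤ) := Int.le_of_dvd (by exact_mod_cast hp.pos) h2
    have h2' : p ^ 2 ∣ p := by exact_mod_cast h2
    have hle' := Nat.le_of_dvd hp.pos h2'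
    nlinarith [hp.two_le]
  have hs0 : ((s : ℤ) : ZMod p) ≠ 0 := by
    intro hs
    rw [ZMod.intCast_zmod_eq_zero_iff_dvd] at hs
    have hr : ((r : ℤ) : ZMod p) = 0 := by
      have hsq : (r : ZMod p) ^ 2 = 0 := by
        rw [hrel, (ZMod.intCast_zmod_eq_zero_iff_dvd s p).mpr hs]
        ring
      exact pow_eq_zero_iff (by norm_num) |>.mp hsq
    rw [ZMod.intCast_zmod_eq_zero_iff_dvd] at hr
    exact hboth ⟨hr, hs⟩
  have hpdvd2 : ¬ (p : ℤ) ∣ 2 := by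
    intro hd
    have hle : (p : ℤ) ≤ 2 := Int.le_of_dvd (by norm_num) hd
    have : (2 : ℤ) ≤ p := by exact_mod_cast hp.two_le
    exact hp2 (by omega)
  have h2ne : ((2 : ℤ) : ZMod p) ≠ 0 := by
    intro h2
    rw [ZMod.intCast_zmod_eq_zero_iff_dvd] at h2
    exact hpdvd2 h2
  have hr0 : ((r : ℤ) : ZMod p) ≠ 0 := by
    intro hr
    rw [ZMod.intCast_zmod_eq_zero_iff_dvd] at hr
    have hs : ((s : ℤ) : ZMod p) = 0 := by
      have hsq : ((2 : ℤ) : ZMod p) * (s : ZMod p) ^ 2 = 0 := by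
        have hh := hrel
        rw [(ZMod.intCast_zmod_eq_zero_iff_dvd r p).mpr hr] at hh
        push_cast
        linear_combination hh
      rcases mul_eq_zero.mp hsq with h' | h'
      · exact absurd h' h2ne
      · exact pow_eq_zero_iff (by norm_num) |>.mp h'
    exact hs0 hs
  -- no prime divides both r and s
  have hcop : ∀ q : ℕ, q.Prime → (q : ℤ) ∣ s → ¬ (q : ℤ) ∣ r := by
    intro q hq hqs hqr
    have h2 : ((q : ℤ)) ^ 2 ∣ (p : ℤ) := by
      rw [h]
      exact dvd_add (pow_dvd_pow_of_dvd hqr 2) ((pow_dvd_pow_of_dvd hqs 2).mul_left 2)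
    have h2' : q ^ 2 ∣ p := by exact_mod_cast h2
    rcases (Nat.Prime.eq_one_or_self_of_dvd hp _ h2') with h1 | h1
    · nlinarith [hq.two_le]
    · have hqd : q ∣ p := ⟨q, by rw [← h1]; ring⟩
      rcases (Nat.Prime.eq_one_or_self_of_dvd hp _ hqd) with h2'' | h2''
      · exact hq.one_lt.ne' h2''
      · subst h2''
        nlinarith [hp.two_le]
  -- every prime factor of s is a QR mod p
  have hfac : ∀ q : ℕ, q.Prime → q ∣ s.natAbs → legendreSym p (q : ℤ) = 1 := by
    intro q hq hqs
    haveI : Fact q.Prime := ⟨hq⟩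
    have hqs' : (q : ℤ) ∣ s := by
      rw [← Int.natAbs_dvd_natAbs]
      simpa using hqs
    rcases eq_or_ne q 2 with rfl | hq2
    · have hcast2 : ((2 : ℕ) : ℤ) = 2 := by norm_num
      rw [hcast2, legendreSym.eq_one_iff p h2ne]
      have h2sq : IsSquare (2 : ZMod p) :=
        (ZMod.exists_sq_eq_two_iff hp2).mpr (Or.inl hp8)
      simpa using h2sq
    · -- q odd prime, use reciprocity
      have hqp : q ≠ p := by
        rintro rfl
        exact hs0 ((ZMod.intCast_zmod_eq_zero_iff_dvd s q).mpr hqs')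
      rw [← legendreSym.quadratic_reciprocity_one_mod_four hp4 hq2]
      have hmodeq : ((p : ℕ) : ℤ) % (q : ℤ) = (r ^ 2) % (q : ℤ) := by
        have hdvd : (q : ℤ) ∣ (r ^ 2 - (p : ℤ)) := by
          rw [h]
          have heq : (r ^ 2 - (r ^ 2 + 2 * s ^ 2)) = -(2 * (s * s)) := by ring
          rw [heq]
          exact dvd_neg.mpr ((hqs'.mul_left s).mul_left 2)
        exact Int.modEq_iff_dvd.mpr hdvd
      rw [legendreSym.mod q, hmodeq, ← legendreSym.mod q]
      refine legendreSym.sq_one' q ?_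
      intro hd
      rw [ZMod.intCast_zmod_eq_zero_iff_dvd] at hd
      exact hcop q hq hqs' hd
  -- s is a square mod p
  have hss : IsSquare ((s : ℤ) : ZMod p) := by
    have hsne : s ≠ 0 := by
      rintro rfl
      simp at hs0
    have hsign : legendreSym p s.sign = 1 := by
      rcases lt_trichotomy s 0 with hlt | heq | hgt
      · rw [Int.sign_eq_neg_one_iff_neg.mpr hlt]
        rw [legendreSym.eq_one_iff]
        · rw [Int.cast_neg, Int.cast_one]
          exact ZMod.exists_sq_eq_neg_one_iff.mpr (by omega)
        · rw [Int.cast_neg, Int.cast_one]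
          exact neg_ne_zero.mpr one_ne_zero
      · exact absurd heq hsne
      · rw [Int.sign_eq_one_iff_pos.mpr hgt]
        exact legendreSym.at_one p
    have hnat : legendreSym p (s.natAbs : ℤ) = 1 :=
      legendre_prod_aux p s.natAbs (Int.natAbs_pos.mpr hsne) hfac
    have hone : legendreSym p s = 1 := by
      rw [← Int.sign_mul_natAbs s, legendreSym.mul, hsign, hnat, one_mul]
    exact (legendreSym.eq_one_iff p hs0).mp hone
  -- get b with b ^ 4 = -1
  obtain ⟨i, hi⟩ : IsSquare (-1 : ZMod p) :=
    ZMod.exists_sq_eq_neg_one_iff.mpr (by omega)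
  have hi2 : i ^ 2 = -1 := by rw [sq, ← hi]
  have hi0 : i ≠ 0 := by
    intro h'
    rw [h'] at hi2
    have : (1 : ZMod p) = 0 := by linear_combination hi2
    exact one_ne_zero this
  obtain ⟨b, hb⟩ : IsSquare i := by
    rw [ZMod.euler_criterion p hi0]
    have hdiv : p / 2 = 4 * (p / 8) := by omega
    rw [hdiv, pow_mul]
    have hi4 : i ^ 4 = 1 := by
      have h4 : i ^ 4 = (i ^ 2) ^ 2 := by ring
      rw [h4, hi2]; ring
    rw [hi4, one_pow]
  have hb2 : b ^ 2 = i := by rw [sq, ← hb]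
  have hb4 : b ^ 4 = -1 := by
    have h4 : b ^ 4 = (b ^ 2) ^ 2 := by ring
    rw [h4, hb2, hi2]
  have hb0 : b ≠ 0 := by
    intro h'
    rw [h'] at hb4
    have : (1 : ZMod p) = 0 := by linear_combination hb4
    exact one_ne_zero this
  have hbb : b ^ 2 ≠ 0 := pow_ne_zero 2 hb0
  obtain ⟨e, he⟩ := hss
  have he2 : ((s : ℤ) : ZMod p) = e ^ 2 := by rw [sq, ← he]
  have he0 : e ≠ 0 := by
    intro h'
    rw [h', sq] at he2
    simp at he2
    exact hs0 he2
  have hee : e ^ 4 ≠ 0 := pow_ne_zero 4 he0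
  -- rewrite the relation in terms of e
  have hrel' : (r : ZMod p) ^ 2 = -(2 * e ^ 4) := by
    rw [hrel, he2]; ring
  constructor
  · rintro ⟨c, hc⟩
    have hc2 : (r : ZMod p) = c ^ 2 := by rw [sq, ← hc]
    refine ⟨b * c * e⁻¹, ?_⟩
    calc (b * c * e⁻¹) ^ 4 = b ^ 4 * (c ^ 2) ^ 2 * (e ^ 4)⁻¹ := by ring
      _ = (-1) * (-(2 * e ^ 4)) * (e ^ 4)⁻¹ := by rw [hb4, ← hc2, hrel']
      _ = 2 * (e ^ 4 * (e ^ 4)⁻¹) := by ring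
      _ = 2 := by rw [mul_inv_cancel₀ hee, mul_one]
  · rintro ⟨x, hx⟩
    have key : (x ^ 2 * e ^ 2 - b ^ 2 * (r : ZMod p)) *
        (x ^ 2 * e ^ 2 + b ^ 2 * (r : ZMod p)) = 0 := by
      linear_combination e ^ 4 * hx - (r : ZMod p) ^ 2 * hb4 + hrel'
    rcases mul_eq_zero.mp key with h' | h'
    · refine ⟨x * e * b⁻¹, ?_⟩
      rw [← sq]
      have hxe : x ^ 2 * e ^ 2 = b ^ 2 * (r : ZMod p) := by linear_combination h'
      calc (r : ZMod p) = (b ^ 2 * (r : ZMod p)) * (b ^ 2)⁻¹ := by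
            rw [mul_comm (b ^ 2), mul_assoc, mul_inv_cancel₀ hbb, mul_one]
        _ = (x ^ 2 * e ^ 2) * (b ^ 2)⁻¹ := by rw [← hxe]
        _ = (x * e * b⁻¹) ^ 2 := by ring
    · refine ⟨x * e * b, ?_⟩
      rw [← sq]
      apply mul_left_cancel₀ hbb
      linear_combination -(x ^ 2 * e ^ 2) * hb4 + h'
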